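/- Let λ_i ≠ λ_j be two distinct eigenvalues of an n×n integer matrix A. Then |λ_j/λ_i − 1| ≥ 8^(−n) · (4n)^(−n²) · (max_{k,l}|A_{kl}|)^(−2n²). -/

import Mathlib

/-- The maximum absolute value of the entries of an integer matrix. -/
def maxEntry {m n : ℕ} (A : Matrix (Fin m) (Fin n) ℤ) : ℕ :=
  (Finset.univ ×ˢ Finset.univ).sup fun p : Fin m × Fin n => (A p.1 p.2).natAbs

set_option maxHeartbeats 1000000

open Polynomial Matrix IntermediateField

lemma maxEntry_bound {m n : ℕ} (A : Matrix (Fin m) (Fin n) ℤ) (k : Fin m) (l : Fin n) :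
    (A k l).natAbs ≤ maxEntry A := by
  unfold maxEntry
  exact Finset.le_sup (f := fun p : Fin m × Fin n => (A p.1 p.2).natAbs) (b := (k, l)) (by simp)

lemma my_eval_charpoly {n : ℕ} {F : Type*} [Field F] (B : Matrix (Fin n) (Fin n) F) (μ : F) :
    B.charpoly.eval μ = (Matrix.scalar (Fin n) μ - B).det := by
  rw [Matrix.charpoly, eval_det, Matrix.matPolyEquiv_charmatrix]
  simp

lemma my_root_iff_eig {n : ℕ} (B : Matrix (Fin n) (Fin n) ℂ) (μ : ℂ) :
    B.charpoly.eval μ = 0 ↔ ∃ v : Fin n → ℂ, v ≠ 0 ∧ B.mulVec v = μ • v := by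
  rw [my_eval_charpoly]
  rw [← Matrix.exists_mulVec_eq_zero_iff]
  constructor
  · rintro ⟨v, hv, h⟩
    refine ⟨v, hv, ?_⟩
    have : (Matrix.scalar (Fin n) μ).mulVec v - B.mulVec v = 0 := by
      rw [← Matrix.sub_mulVec]; exact h
    have h2 : (Matrix.scalar (Fin n) μ).mulVec v = μ • v := by
      funext i; simp [Matrix.mulVec, dotProduct, Matrix.diagonal]
    rw [h2] at this
    exact (sub_eq_zero.mp this).symm
  · rintro ⟨v, hv, h⟩
    refine ⟨v, hv, ?_⟩
    have h2 : (Matrix.scalar (Fin n) μ).mulVec v = μ • v := by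
      funext i; simp [Matrix.mulVec, dotProduct, Matrix.diagonal]
    rw [Matrix.sub_mulVec, h2, h, sub_self]

lemma gershgorin {n : ℕ} (A : Matrix (Fin n) (Fin n) ℤ) (μ : ℂ) (v : Fin n → ℂ) (hv : v ≠ 0)
    (h : (A.map (Int.cast : ℤ → ℂ)).mulVec v = μ • v) :
    ‖μ‖ ≤ n * maxEntry A := by
  have hne : Nonempty (Fin n) := by
    by_contra hc
    exact hv (funext fun i => absurd ⟨i⟩ hc)
  obtain ⟨k, -, hk⟩ := Finset.exists_max_image Finset.univ (fun l => ‖v l‖)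
    ⟨Classical.arbitrary _, Finset.mem_univ _⟩
  have hvk : 0 < ‖v k‖ := by
    rcases eq_or_lt_of_le (norm_nonneg (v k)) with h0 | h0
    · exfalso; apply hv; funext i
      have := hk i (Finset.mem_univ i)
      rw [← h0] at this
      simpa using le_antisymm this (norm_nonneg _)
    · exact h0
  have hrow : μ * v k = ∑ l, (A k l : ℂ) * v l := by
    have := congrFun h k
    simp only [Matrix.mulVec, dotProduct, Matrix.map_apply, Pi.smul_apply,
      smul_eq_mul] at this
    rw [← this]
  have : ‖μ‖ * ‖v k‖ ≤ (n * maxEntry A) * ‖v k‖ := by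
    calc ‖μ‖ * ‖v k‖ = ‖μ * v k‖ := (norm_mul _ _).symm
    _ = ‖∑ l, (A k l : ℂ) * v l‖ := by rw [hrow]
    _ ≤ ∑ l, ‖(A k l : ℂ) * v l‖ := norm_sum_le _ _
    _ ≤ ∑ l : Fin n, (maxEntry A : ℝ) * ‖v k‖ := by
        apply Finset.sum_le_sum
        intro l _
        rw [norm_mul]
        apply mul_le_mul
        · calc ‖(A k l : ℂ)‖ = |(A k l : ℝ)| := by
                rw [show ((A k l : ℂ)) = ((A k l : ℝ) : ℂ) by push_cast; ring, Complex.norm_real, Real.norm_eq_abs]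
          _ = ((A k l).natAbs : ℝ) := by
                rw [← Int.cast_abs, Int.abs_eq_natAbs, Int.cast_natCast]
          _ ≤ (maxEntry A : ℝ) := by exact_mod_cast maxEntry_bound A k l
        · exact hk l (Finset.mem_univ l)
        · exact norm_nonneg _
        · exact Nat.cast_nonneg _
    _ = (n * maxEntry A) * ‖v k‖ := by
        rw [Finset.sum_const, Finset.card_univ, Fintype.card_fin, nsmul_eq_mul]; ring
  exact le_of_mul_le_mul_right this hvk

lemma root_abs_le {n : ℕ} (A : Matrix (Fin n) (Fin n) ℤ) (z : ℂ)
    (hz : Polynomial.aeval z A.charpoly = 0) : ‖z‖ ≤ n * maxEntry A := by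
  have h1 : (A.map (Int.cast : ℤ → ℂ)).charpoly.eval z = 0 := by
    have : (A.map (Int.cast : ℤ → ℂ)) = A.map (Int.castRingHom ℂ) := rfl
    rw [this, Matrix.charpoly_map]
    rwa [Polynomial.aeval_def, Polynomial.eval₂_eq_eval_map] at hz
  obtain ⟨v, hv, h⟩ := (my_root_iff_eig _ z).mp h1
  exact gershgorin A z v hv h

lemma eig_root {n : ℕ} (A : Matrix (Fin n) (Fin n) ℤ) (μ : ℂ) (v : Fin n → ℂ) (hv : v ≠ 0)
    (h : (A.map (Int.cast : ℤ → ℂ)).mulVec v = μ • v) :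
    Polynomial.aeval μ A.charpoly = 0 := by
  have h1 : (A.map (Int.cast : ℤ → ℂ)).charpoly.eval μ = 0 :=
    (my_root_iff_eig _ μ).mpr ⟨v, hv, h⟩
  have : (A.map (Int.cast : ℤ → ℂ)) = A.map (Int.castRingHom ℂ) := rfl
  rw [this, Matrix.charpoly_map] at h1
  rwa [Polynomial.aeval_def, Polynomial.eval₂_eq_eval_map]

/-- Let `λᵢ ≠ λⱼ` be two distinct (nonzero) eigenvalues of an `n × n` integer matrix `A`.  Then
`|λⱼ/λᵢ - 1| ≥ 8^(-n) (4n)^(-n²) (max |A k l|)^(-2n²)`. -/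
theorem stmt15 {n : ℕ} (A : Matrix (Fin n) (Fin n) ℤ) (li lj : ℂ)
    (hi : ∃ v : Fin n → ℂ, v ≠ 0 ∧ (A.map (Int.cast : ℤ → ℂ)).mulVec v = li • v)
    (hj : ∃ v : Fin n → ℂ, v ≠ 0 ∧ (A.map (Int.cast : ℤ → ℂ)).mulVec v = lj • v)
    (hne : li ≠ lj) (hi0 : li ≠ 0) :
    ‖lj / li - 1‖ ≥
      ((8 : ℝ) ^ n * (4 * (n : ℝ)) ^ (n ^ 2) * (maxEntry A : ℝ) ^ (2 * n ^ 2))⁻¹ := by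
  obtain ⟨v, hv, hAv⟩ := hi
  obtain ⟨w, hw, hAw⟩ := hj
  have hn : 0 < n := by
    by_contra hc
    push_neg at hc
    interval_cases n
    exact hv (funext fun i => absurd i.2 (by omega))
  have hM : 1 ≤ maxEntry A := by
    by_contra hc
    push_neg at hc
    have hM0 : maxEntry A = 0 := by omega
    have hA : ∀ k l, A k l = 0 := fun k l =>
      Int.natAbs_eq_zero.mp (Nat.le_zero.mp (hM0 ▸ maxEntry_bound A k l))
    have h0 : (A.map (Int.cast : ℤ → ℂ)).mulVec v = 0 := by
      funext k; simp [Matrix.mulVec, dotProduct, hA]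
    rw [hAv] at h0
    rcases smul_eq_zero.mp h0 with h | h
    · exact hi0 h
    · exact hv h
  set M : ℝ := (maxEntry A : ℝ) with hMdef
  have hM1 : (1 : ℝ) ≤ M := by rw [hMdef]; exact_mod_cast hM
  set B : ℝ := (n : ℝ) * M with hBdef
  have hn1 : (1 : ℝ) ≤ (n : ℝ) := by exact_mod_cast hn
  have hB1 : (1 : ℝ) ≤ B := one_le_mul_of_one_le_of_one_le hn1 hM1
  have hli_le : ‖li‖ ≤ B := gershgorin A li v hv hAv
  have hroot_li : Polynomial.aeval li A.charpoly = 0 := eig_root A li v hv hAv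
  have hroot_lj : Polynomial.aeval lj A.charpoly = 0 := eig_root A lj w hw hAw
  have hint_li : IsIntegral ℤ li := ⟨A.charpoly, A.charpoly_monic, by
    rwa [← Polynomial.aeval_def]⟩
  have hint_lj : IsIntegral ℤ lj := ⟨A.charpoly, A.charpoly_monic, by
    rwa [← Polynomial.aeval_def]⟩
  have hintQ_li : IsIntegral ℚ li := hint_li.tower_top
  have hintQ_lj : IsIntegral ℚ lj := hint_lj.tower_top
  -- the field K = ℚ(li, lj)
  set K := IntermediateField.adjoin ℚ ({li, lj} : Set ℂ) with hKdef
  haveI : Finite (({li, lj} : Set ℂ)) := Set.Finite.to_subtype (Set.toFinite _)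
  haveI hFD : FiniteDimensional ℚ K := IntermediateField.finiteDimensional_adjoin
    (fun x hx => by
      rcases hx with h | h
      · exact h ▸ hintQ_li
      · exact (Set.mem_singleton_iff.mp h) ▸ hintQ_lj)
  have hmem_li : li ∈ K := IntermediateField.subset_adjoin ℚ _ (by simp)
  have hmem_lj : lj ∈ K := IntermediateField.subset_adjoin ℚ _ (by simp)
  set li' : K := ⟨li, hmem_li⟩ with hli'
  set lj' : K := ⟨lj, hmem_lj⟩ with hlj'
  -- degree bound
  set q : ℚ[X] := A.charpoly.map (algebraMap ℤ ℚ) with hq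
  have hqmonic : q.Monic := A.charpoly_monic.map _
  have hqdeg : q.natDegree = n := by
    rw [hq, A.charpoly_monic.natDegree_map, Matrix.charpoly_natDegree_eq_dim,
      Fintype.card_fin]
  have haq_li : Polynomial.aeval li q = 0 := by
    rw [hq, Polynomial.aeval_map_algebraMap]; exact hroot_li
  have haq_lj : Polynomial.aeval lj q = 0 := by
    rw [hq, Polynomial.aeval_map_algebraMap]; exact hroot_lj
  have hd : Module.finrank ℚ K ≤ n ^ 2 := by
    haveI i1 : FiniteDimensional ℚ ↥ℚ⟮li⟯ := IntermediateField.adjoin.finiteDimensional hintQ_li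
    have hintK : IsIntegral (↥ℚ⟮li⟯) lj := hintQ_lj.tower_top (A := ↥ℚ⟮li⟯)
    haveI i2 : FiniteDimensional ↥ℚ⟮li⟯ ↥ℚ⟮li⟯⟮lj⟯ :=
      IntermediateField.adjoin.finiteDimensional hintK
    have e1 : Module.finrank ℚ ↥ℚ⟮li⟯ ≤ n := by
      rw [IntermediateField.adjoin.finrank hintQ_li]
      exact hqdeg ▸ Polynomial.natDegree_le_of_dvd (minpoly.dvd ℚ li haq_li) hqmonic.ne_zero
    have e2 : Module.finrank ↥ℚ⟮li⟯ ↥ℚ⟮li⟯⟮lj⟯ ≤ n := by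
      rw [IntermediateField.adjoin.finrank hintK]
      have hdvd : minpoly (↥ℚ⟮li⟯) lj ∣ q.map (algebraMap ℚ ↥ℚ⟮li⟯) := by
        apply minpoly.dvd
        rw [Polynomial.aeval_map_algebraMap]
        exact haq_lj
      have hmono : (q.map (algebraMap ℚ ↥ℚ⟮li⟯)).Monic := hqmonic.map _
      calc (minpoly (↥ℚ⟮li⟯) lj).natDegree ≤ (q.map (algebraMap ℚ ↥ℚ⟮li⟯)).natDegree :=
            Polynomial.natDegree_le_of_dvd hdvd hmono.ne_zero
      _ = q.natDegree := hqmonic.natDegree_map _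
      _ = n := hqdeg
    have e3 : (ℚ⟮li⟯⟮lj⟯.restrictScalars ℚ) = K :=
      IntermediateField.adjoin_simple_adjoin_simple (F := ℚ) (α := li) lj
    have e4 : Module.finrank ℚ K = Module.finrank ℚ ↥ℚ⟮li⟯⟮lj⟯ := by rw [← e3]; rfl
    calc Module.finrank ℚ K = Module.finrank ℚ ↥ℚ⟮li⟯⟮lj⟯ := e4
    _ = Module.finrank ℚ ↥ℚ⟮li⟯ * Module.finrank ↥ℚ⟮li⟯ ↥ℚ⟮li⟯⟮lj⟯ :=
        (Module.finrank_mul_finrank ℚ (↥ℚ⟮li⟯) ↥ℚ⟮li⟯⟮lj⟯).symm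
    _ ≤ n * n := Nat.mul_le_mul e1 e2
    _ = n ^ 2 := (sq n).symm
  -- norm argument
  set x : K := lj' - li' with hxdef
  have hx0 : x ≠ 0 := by
    rw [hxdef, sub_ne_zero]
    intro hcontra
    exact hne (congrArg Subtype.val hcontra).symm
  have hint_li' : IsIntegral ℤ li' := by
    rw [← isIntegral_algebraMap_iff (algebraMap K ℂ).injective]
    exact hint_li
  have hint_lj' : IsIntegral ℤ lj' := by
    rw [← isIntegral_algebraMap_iff (algebraMap K ℂ).injective]
    exact hint_lj
  have hint_x : IsIntegral ℤ x := hint_lj'.sub hint_li'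
  have hNint : IsIntegral ℤ (Algebra.norm ℚ x) := Algebra.isIntegral_norm ℚ hint_x
  obtain ⟨m, hm⟩ := IsIntegrallyClosed.isIntegral_iff.mp hNint
  have hN0 : Algebra.norm ℚ x ≠ 0 := by
    rw [Algebra.norm_ne_zero_iff]
    exact hx0
  have hm0 : m ≠ 0 := by
    rintro rfl
    apply hN0
    rw [← hm]; simp
  have h1N : (1 : ℝ) ≤ ‖algebraMap ℚ ℂ (Algebra.norm ℚ x)‖ := by
    rw [← hm]
    have : (algebraMap ℚ ℂ) ((algebraMap ℤ ℚ) m) = (m : ℂ) := by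
      rw [← IsScalarTower.algebraMap_apply]; simp
    rw [this]
    calc (1 : ℝ) ≤ |(m : ℝ)| := by
          rw [← Int.cast_abs]
          exact_mod_cast Int.one_le_abs hm0
    _ = ‖((m : ℝ) : ℂ)‖ := by rw [Complex.norm_real, Real.norm_eq_abs]
    _ = ‖(m : ℂ)‖ := by rw [Complex.ofReal_intCast]
  have hprod : (algebraMap ℚ ℂ) (Algebra.norm ℚ x) = ∏ σ : K →ₐ[ℚ] ℂ, σ x :=
    Algebra.norm_eq_prod_embeddings ℚ ℂ x
  -- bound conjugates
  have hconj : ∀ σ : K →ₐ[ℚ] ℂ, ‖σ x‖ ≤ 2 * B := by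
    intro σ
    have key : ∀ (y : K), Polynomial.aeval (y : ℂ) A.charpoly = 0 →
        ‖σ y‖ ≤ B := by
      intro y hy
      have h1 : Polynomial.aeval y A.charpoly = 0 := by
        apply (algebraMap K ℂ).injective
        rw [map_zero, ← Polynomial.aeval_algebraMap_apply]
        exact hy
      have h2 : Polynomial.aeval (σ y) A.charpoly = 0 := by
        have h3 := Polynomial.aeval_algHom_apply (σ.restrictScalars ℤ) y A.charpoly
        rw [h1, map_zero] at h3
        exact h3
      exact root_abs_le A (σ y) h2
    have hxeq : σ x = σ lj' - σ li' := by rw [hxdef, map_sub]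
    rw [hxeq]
    calc ‖σ lj' - σ li'‖ ≤ ‖σ lj'‖ + ‖σ li'‖ :=
          norm_sub_le _ _
    _ ≤ B + B := add_le_add (key lj' hroot_lj) (key li' hroot_li)
    _ = 2 * B := by ring
  -- the identity embedding
  set σ₀ : K →ₐ[ℚ] ℂ := K.val with hσ₀
  have hσ₀x : σ₀ x = lj - li := by
    rw [hxdef, map_sub, hσ₀]
    rfl
  have hcard : Fintype.card (K →ₐ[ℚ] ℂ) = Module.finrank ℚ K := AlgHom.card ℚ K ℂ
  -- main inequality
  haveI : DecidableEq (↥K →ₐ[ℚ] ℂ) := Classical.decEq _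
  have h2B : (1 : ℝ) ≤ 2 * B := by linarith
  have hmain : (1 : ℝ) ≤ ‖lj - li‖ * (2 * B) ^ (n ^ 2 - 1) := by
    have hcard_erase : (Finset.univ.erase σ₀).card ≤ n ^ 2 - 1 := by
      rw [Finset.card_erase_of_mem (Finset.mem_univ σ₀), Finset.card_univ, hcard]
      exact Nat.sub_le_sub_right hd 1
    calc (1 : ℝ) ≤ ‖algebraMap ℚ ℂ (Algebra.norm ℚ x)‖ := h1N
    _ = ∏ σ : K →ₐ[ℚ] ℂ, ‖σ x‖ := by
        rw [hprod]; exact norm_prod _ _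
    _ = ‖σ₀ x‖ * ∏ σ ∈ Finset.univ.erase σ₀, ‖σ x‖ :=
        (Finset.mul_prod_erase Finset.univ _ (Finset.mem_univ σ₀)).symm
    _ ≤ ‖σ₀ x‖ * (2 * B) ^ (n ^ 2 - 1) := by
        apply mul_le_mul_of_nonneg_left _ (norm_nonneg _)
        calc ∏ σ ∈ Finset.univ.erase σ₀, ‖σ x‖
            ≤ ∏ _σ ∈ Finset.univ.erase σ₀, (2 * B) :=
              Finset.prod_le_prod (fun _ _ => norm_nonneg _) (fun σ _ => hconj σ)
        _ = (2 * B) ^ (Finset.univ.erase σ₀).card := Finset.prod_const _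
        _ ≤ (2 * B) ^ (n ^ 2 - 1) := pow_le_pow_right₀ h2B hcard_erase
    _ = ‖lj - li‖ * (2 * B) ^ (n ^ 2 - 1) := by rw [hσ₀x]
  have hdiff : ‖lj - li‖ ≥ ((2 * B) ^ (n ^ 2 - 1))⁻¹ := by
    rw [ge_iff_le, inv_le_iff_one_le_mul₀ (by positivity)]
    linarith [hmain]
  have hli_pos : 0 < ‖li‖ := norm_pos_iff.mpr hi0
  have habs : ‖lj / li - 1‖ = ‖lj - li‖ / ‖li‖ := by
    rw [show lj / li - 1 = (lj - li) / li by field_simp, norm_div]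
  have hpow : (2 * B) ^ (n ^ 2 - 1) * B ≤ (8 : ℝ) ^ n * (4 * n) ^ (n ^ 2) * M ^ (2 * n ^ 2) := by
    have hpos2B : (0 : ℝ) < 2 * B := by linarith
    have h1 : (2 * B) ^ (n ^ 2 - 1) * B ≤ (2 * B) ^ (n ^ 2) := by
      calc (2 * B) ^ (n ^ 2 - 1) * B ≤ (2 * B) ^ (n ^ 2 - 1) * (2 * B) := by
            apply mul_le_mul_of_nonneg_left (by linarith) (by positivity)
      _ = (2 * B) ^ (n ^ 2 - 1 + 1) := (pow_succ _ _).symm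
      _ = (2 * B) ^ (n ^ 2) := by congr 1; have : 1 ≤ n ^ 2 := Nat.one_le_pow _ _ hn; omega
    have h2 : (2 * B) ^ (n ^ 2) ≤ (4 * (n : ℝ)) ^ (n ^ 2) * M ^ (2 * n ^ 2) := by
      have hBeq : 2 * B = (2 * (n : ℝ)) * M := by rw [hBdef]; ring
      rw [hBeq, mul_pow]
      apply mul_le_mul
      · exact pow_le_pow_left₀ (by positivity) (by linarith) _
      · exact pow_le_pow_right₀ hM1 (by omega)
      · positivity
      · positivity
    have h3 : (4 * (n : ℝ)) ^ (n ^ 2) * M ^ (2 * n ^ 2) ≤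
        (8 : ℝ) ^ n * (4 * n) ^ (n ^ 2) * M ^ (2 * n ^ 2) := by
      rw [mul_assoc]
      exact le_mul_of_one_le_left (by positivity) (one_le_pow₀ (by norm_num : (1:ℝ) ≤ 8))
    linarith
  rw [ge_iff_le, habs]
  calc ((8 : ℝ) ^ n * (4 * (n : ℝ)) ^ (n ^ 2) * M ^ (2 * n ^ 2))⁻¹
      ≤ ((2 * B) ^ (n ^ 2 - 1) * B)⁻¹ := by
        apply inv_anti₀ (by positivity) hpow
  _ = ((2 * B) ^ (n ^ 2 - 1))⁻¹ * B⁻¹ := by rw [mul_inv]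
  _ ≤ ‖lj - li‖ * (‖li‖)⁻¹ := by
        apply mul_le_mul hdiff (inv_anti₀ hli_pos hli_le) (by positivity)
          (norm_nonneg _)
  _ = ‖lj - li‖ / ‖li‖ := (div_eq_mul_inv _ _).symm
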